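/- Let I(x) be absolutely monotonic with summands concentrating superpolynomially near n ≈ f(x) with window term C x^{-ν}, where f is a polynomial of degree d_f with positive leading coefficient c_f. Let g be another polynomial with positive leading coefficient c_g of degree d_g. Then the summands of I(x) concentrate superpolynomially near n ≈ g(x) (with some window term) if and only if d_f = d_g and c_f = c_g. -/

import Mathlib

open Filter Asymptotics Polynomial

noncomputable def Iser (a : ℕ → ℝ) (x : ℝ) : ℝ := ∑' n : ℕ, a n * x ^ n

noncomputable def sumLE (a : ℕ → ℝ) (x y : ℝ) : ℝ :=
  ∑' n : ℕ, if (n : ℤ) ≤ ⌊y⌋ then a n * x ^ n else 0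

noncomputable def sumGE (a : ℕ → ℝ) (x y : ℝ) : ℝ :=
  ∑' n : ℕ, if ⌊y⌋ ≤ (n : ℤ) then a n * x ^ n else 0

/-- `I(x) = Σ aₙ xⁿ` is absolutely monotonic: all coefficients are nonnegative and
the series converges for every `x > 0`. -/
def AbsMono (a : ℕ → ℝ) : Prop :=
  (∀ n, 0 ≤ a n) ∧ ∀ x : ℝ, 0 < x → Summable fun n : ℕ => a n * x ^ n

/-- The summands of `Σ aₙ xⁿ` concentrate superpolynomially near `n ≈ f(x)` with
window term `C x^{-ν}`. -/
def SuperConc (a : ℕ → ℝ) (f : ℝ → ℝ) (C ν : ℝ) : Prop :=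
  ∀ p : ℝ, 0 < p →
    ((fun x : ℝ => sumLE a x (f x * (1 - C * x ^ (-ν))) / Iser a x)
        =o[atTop] fun x : ℝ => x ^ (-p)) ∧
    ((fun x : ℝ => sumGE a x (f x * (1 + C * x ^ (-ν))) / Iser a x)
        =o[atTop] fun x : ℝ => x ^ (-p))

/-- The summands of `Σ aₙ xⁿ` concentrate exponentially near `n ≈ f(x)` with
window term `C x^{-ν}` and parameters `(α, β)`. -/
def ExpConc (a : ℕ → ℝ) (f : ℝ → ℝ) (C ν α β : ℝ) : Prop :=
  ((fun x : ℝ => sumLE a x (f x * (1 - C * x ^ (-ν))) / Iser a x)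
      =O[atTop] fun x : ℝ => Real.exp (-α * x ^ β)) ∧
  ((fun x : ℝ => sumGE a x (f x * (1 + C * x ^ (-ν))) / Iser a x)
      =O[atTop] fun x : ℝ => Real.exp (-α * x ^ β))

/-- A real sequence is subpolynomial if `bₙ / n^p → 0` for every `p > 0`. -/
def Subpoly (b : ℕ → ℝ) : Prop :=
  ∀ p : ℝ, 0 < p → Tendsto (fun n : ℕ => b n / (n : ℝ) ^ p) atTop (nhds 0)

open Real


lemma poly_div_rpow_zero (p : Polynomial ℝ) {ρ : ℝ} (h : (p.natDegree : ℝ) < ρ) :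
    Tendsto (fun x : ℝ => p.eval x / x ^ ρ) atTop (nhds 0) := by
  have hO : (fun x : ℝ => p.eval x) =O[atTop] fun x => x ^ p.natDegree :=
    (Polynomial.isEquivalent_atTop_lead p).isBigO.trans
      (isBigO_const_mul_self p.leadingCoeff _ atTop)
  have hO2 : (fun x : ℝ => p.eval x / x ^ ρ) =O[atTop] fun x => x ^ p.natDegree / x ^ ρ := by
    simpa [div_eq_mul_inv] using hO.mul (isBigO_refl (fun x : ℝ => (x ^ ρ)⁻¹) atTop)
  refine hO2.trans_tendsto ?_
  have : Tendsto (fun x : ℝ => x ^ ((p.natDegree : ℝ) - ρ)) atTop (nhds 0) := by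
    have := tendsto_rpow_neg_atTop (sub_pos.2 h)
    simpa [neg_sub] using this
  refine this.congr' ?_
  filter_upwards [eventually_gt_atTop (0:ℝ)] with x hx
  rw [rpow_sub hx, rpow_natCast]

lemma poly_div_rpow_lead (p : Polynomial ℝ) (hp : p ≠ 0) :
    Tendsto (fun x : ℝ => p.eval x / x ^ (p.natDegree : ℝ)) atTop (nhds p.leadingCoeff) := by
  have := Polynomial.div_tendsto_leadingCoeff_div_of_degree_eq p (X ^ p.natDegree)
    (by rw [degree_X_pow, Polynomial.degree_eq_natDegree hp])
  simp only [eval_pow, eval_X, leadingCoeff_X_pow, div_one] at this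
  refine this.congr fun x => ?_
  rw [rpow_natCast]

/-- Separation lemma used in the ⇒ direction: if `g/x^{deg f} → L < leadingCoeff f`,
then eventually `g(x)(1+C'x^{-ν'}) ≤ f(x)(1-Cx^{-ν})`. -/
lemma sep_lemma (f g : Polynomial ℝ) (C ν C' ν' L : ℝ) (hν : 0 < ν) (hν' : 0 < ν')
    (hfl : 0 < f.leadingCoeff)
    (hlim : Tendsto (fun x : ℝ => g.eval x / x ^ (f.natDegree : ℝ)) atTop (nhds L))
    (hL : L < f.leadingCoeff) :
    ∀ᶠ x : ℝ in atTop, g.eval x * (1 + C' * x ^ (-ν')) ≤ f.eval x * (1 - C * x ^ (-ν)) := by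
  have hf0 : f ≠ 0 := fun h => by simp [h] at hfl
  have h1 := poly_div_rpow_lead f hf0
  have hR : Tendsto (fun x : ℝ =>
      (f.eval x / x ^ (f.natDegree : ℝ)) * (1 - C * x ^ (-ν)) -
      (g.eval x / x ^ (f.natDegree : ℝ)) * (1 + C' * x ^ (-ν'))) atTop
      (nhds (f.leadingCoeff - L)) := by
    have hν0 := tendsto_rpow_neg_atTop hν
    have hν'0 := tendsto_rpow_neg_atTop hν'
    have c1 : Tendsto (fun _ : ℝ => (1:ℝ)) atTop (nhds 1) := tendsto_const_nhds
    have := (h1.mul (c1.sub (hν0.const_mul C))).sub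
      (hlim.mul (c1.add (hν'0.const_mul C')))
    simpa using this
  have hpos : ∀ᶠ x : ℝ in atTop,
      0 < (f.eval x / x ^ (f.natDegree : ℝ)) * (1 - C * x ^ (-ν)) -
          (g.eval x / x ^ (f.natDegree : ℝ)) * (1 + C' * x ^ (-ν')) :=
    hR.eventually (eventually_gt_nhds (sub_pos.2 hL))
  filter_upwards [hpos, eventually_gt_atTop (0:ℝ)] with x hx hx0
  have hxd : (0:ℝ) < x ^ (f.natDegree : ℝ) := rpow_pos_of_pos hx0 _
  have e : (f.eval x / x ^ (f.natDegree : ℝ) * (1 - C * x ^ (-ν)) -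
      g.eval x / x ^ (f.natDegree : ℝ) * (1 + C' * x ^ (-ν'))) * x ^ (f.natDegree : ℝ) =
      f.eval x * (1 - C * x ^ (-ν)) - g.eval x * (1 + C' * x ^ (-ν')) := by
    field_simp
  have h2 := mul_pos hx hxd
  rw [e] at h2
  linarith

/-- Positivity lemma used in the ⇐ direction. -/
lemma pos_lemma (q f g : Polynomial ℝ) (C ν ν' Lf : ℝ) (hC : 0 < C) (hν' : 0 < ν')
    (hνν' : ν' < ν) (hgl : 0 < g.leadingCoeff)
    (hq : Tendsto (fun x : ℝ => q.eval x / x ^ ((g.natDegree : ℝ) - ν')) atTop (nhds 0))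
    (hf : Tendsto (fun x : ℝ => f.eval x / x ^ (g.natDegree : ℝ)) atTop (nhds Lf)) :
    ∀ᶠ x : ℝ in atTop,
      0 ≤ q.eval x + C * g.eval x * x ^ (-ν') - C * f.eval x * x ^ (-ν) := by
  have hg0 : g ≠ 0 := fun h => by simp [h] at hgl
  have hg := poly_div_rpow_lead g hg0
  have hR : Tendsto (fun x : ℝ =>
      q.eval x / x ^ ((g.natDegree : ℝ) - ν') + C * (g.eval x / x ^ (g.natDegree : ℝ)) -
      C * (f.eval x / x ^ (g.natDegree : ℝ)) * x ^ (ν' - ν)) atTop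
      (nhds (C * g.leadingCoeff)) := by
    have h3 : Tendsto (fun x : ℝ => x ^ (ν' - ν)) atTop (nhds 0) := by
      have := tendsto_rpow_neg_atTop (sub_pos.2 hνν')
      simpa [neg_sub] using this
    have := (hq.add ((hg.const_mul C))).sub (((hf.const_mul C)).mul h3)
    simpa using this
  have hpos := hR.eventually (eventually_gt_nhds (mul_pos hC hgl))
  filter_upwards [hpos, eventually_gt_atTop (0:ℝ)] with x hx hx0
  have hρ : (0:ℝ) < x ^ ((g.natDegree : ℝ) - ν') := rpow_pos_of_pos hx0 _
  have key : q.eval x + C * g.eval x * x ^ (-ν') - C * f.eval x * x ^ (-ν) =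
      (q.eval x / x ^ ((g.natDegree : ℝ) - ν') + C * (g.eval x / x ^ (g.natDegree : ℝ)) -
       C * (f.eval x / x ^ (g.natDegree : ℝ)) * x ^ (ν' - ν)) *
      x ^ ((g.natDegree : ℝ) - ν') := by
    have e1 : x ^ ((g.natDegree : ℝ) - ν') = x ^ (g.natDegree : ℝ) * x ^ (-ν') := by
      rw [← rpow_add hx0]; ring_nf
    have e2 : x ^ (ν' - ν) * x ^ (-ν') = x ^ (-ν) := by
      rw [← rpow_add hx0]; ring_nf
    have hd : (0:ℝ) < x ^ (g.natDegree : ℝ) := rpow_pos_of_pos hx0 _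
    have hv' : (0:ℝ) < x ^ (-ν' : ℝ) := rpow_pos_of_pos hx0 _
    rw [e1]
    field_simp
    rw [← e2]
    ring
  rw [key]
  positivity



variable {a : ℕ → ℝ} {x y y₁ y₂ : ℝ}

lemma term_nonneg (ha : ∀ n, 0 ≤ a n) (hx : 0 ≤ x) (n : ℕ) : 0 ≤ a n * x ^ n :=
  mul_nonneg (ha n) (pow_nonneg hx n)

lemma summable_ite (ha : ∀ n, 0 ≤ a n) (hx : 0 ≤ x)
    (hs : Summable fun n : ℕ => a n * x ^ n) (P : ℕ → Prop) [DecidablePred P] :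
    Summable fun n : ℕ => if P n then a n * x ^ n else 0 := by
  refine Summable.of_nonneg_of_le (fun n => ?_) (fun n => ?_) hs
  · split
    · exact term_nonneg ha hx n
    · exact le_rfl
  · split
    · exact le_rfl
    · exact term_nonneg ha hx n

lemma sumLE_nonneg (ha : ∀ n, 0 ≤ a n) (hx : 0 ≤ x) : 0 ≤ sumLE a x y := by
  refine tsum_nonneg fun n => ?_
  split
  · exact term_nonneg ha hx n
  · exact le_rfl

lemma sumGE_nonneg (ha : ∀ n, 0 ≤ a n) (hx : 0 ≤ x) : 0 ≤ sumGE a x y := by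
  refine tsum_nonneg fun n => ?_
  split
  · exact term_nonneg ha hx n
  · exact le_rfl

lemma Iser_pos (ha : ∀ n, 0 ≤ a n) (hs : Summable fun n : ℕ => a n * x ^ n)
    (hne : ∃ n, a n ≠ 0) (hx : 0 < x) : 0 < Iser a x := by
  obtain ⟨n0, hn0⟩ := hne
  exact Summable.tsum_pos hs (term_nonneg ha hx.le) n0
    (mul_pos ((ha n0).lt_of_ne' hn0) (pow_pos hx n0))

lemma sumLE_mono (ha : ∀ n, 0 ≤ a n) (hx : 0 ≤ x)
    (hs : Summable fun n : ℕ => a n * x ^ n) (h : y₁ ≤ y₂) :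
    sumLE a x y₁ ≤ sumLE a x y₂ := by
  refine Summable.tsum_le_tsum (fun n => ?_) (summable_ite ha hx hs _) (summable_ite ha hx hs _)
  by_cases hn : (n : ℤ) ≤ ⌊y₁⌋
  · rw [if_pos hn, if_pos (hn.trans (Int.floor_mono h))]
  · rw [if_neg hn]
    split
    · exact term_nonneg ha hx n
    · exact le_rfl

lemma sumGE_anti (ha : ∀ n, 0 ≤ a n) (hx : 0 ≤ x)
    (hs : Summable fun n : ℕ => a n * x ^ n) (h : y₁ ≤ y₂) :
    sumGE a x y₂ ≤ sumGE a x y₁ := by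
  refine Summable.tsum_le_tsum (fun n => ?_) (summable_ite ha hx hs _) (summable_ite ha hx hs _)
  by_cases hn : ⌊y₂⌋ ≤ (n : ℤ)
  · rw [if_pos hn, if_pos ((Int.floor_mono h).trans hn)]
  · rw [if_neg hn]
    split
    · exact term_nonneg ha hx n
    · exact le_rfl

lemma Iser_le_cover (ha : ∀ n, 0 ≤ a n) (hx : 0 ≤ x)
    (hs : Summable fun n : ℕ => a n * x ^ n) {F G : ℝ} (h : F ≤ G) :
    Iser a x ≤ sumLE a x G + sumGE a x F := by
  have h1 := summable_ite ha hx hs (fun n : ℕ => (n:ℤ) ≤ ⌊G⌋)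
  have h2 := summable_ite ha hx hs (fun n : ℕ => ⌊F⌋ ≤ (n:ℤ))
  rw [Iser, sumLE, sumGE, ← Summable.tsum_add h1 h2]
  refine Summable.tsum_le_tsum (fun n => ?_) hs (h1.add h2)
  by_cases hn : (n : ℤ) ≤ ⌊G⌋
  · rw [if_pos hn]
    have : (0:ℝ) ≤ if ⌊F⌋ ≤ (n : ℤ) then a n * x ^ n else 0 := by
      split
      · exact term_nonneg ha hx n
      · exact le_rfl
    linarith
  · rw [if_neg hn, if_pos ((Int.floor_mono h).trans (lt_of_not_ge hn).le)]
    simp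



theorem stmt7 (a : ℕ → ℝ) (f g : Polynomial ℝ) (C ν : ℝ) (hC : 0 < C) (hν : 0 < ν)
    (ha : AbsMono a) (hne : ∃ n, a n ≠ 0)
    (hfl : 0 < f.leadingCoeff) (hgl : 0 < g.leadingCoeff)
    (hconc : SuperConc a (fun x => f.eval x) C ν) :
    (∃ C' > (0 : ℝ), ∃ ν' > (0 : ℝ), SuperConc a (fun x => g.eval x) C' ν') ↔
      f.natDegree = g.natDegree ∧ f.leadingCoeff = g.leadingCoeff := by
  obtain ⟨hnn, hsum⟩ := ha
  have hf0 : f ≠ 0 := fun h => by simp [h] at hfl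
  have hg0 : g ≠ 0 := fun h => by simp [h] at hgl
  constructor
  · rintro ⟨C', hC', ν', hν', hconc'⟩
    have core : ∀ (F G : ℝ → ℝ) (C1 ν1 C2 ν2 : ℝ),
        SuperConc a F C1 ν1 → SuperConc a G C2 ν2 →
        (∀ᶠ x : ℝ in Filter.atTop,
          F x * (1 + C1 * x ^ (-ν1)) ≤ G x * (1 - C2 * x ^ (-ν2))) → False := by
      intro F G C1 ν1 C2 ν2 h1 h2 hsep
      have hg := (h1 1 one_pos).2
      have hl := (h2 1 one_pos).1
      have hx1 : Tendsto (fun x : ℝ => x ^ (-(1:ℝ))) atTop (nhds 0) :=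
        tendsto_rpow_neg_atTop one_pos
      have ht : Tendsto (fun x : ℝ =>
          sumLE a x (G x * (1 - C2 * x ^ (-ν2))) / Iser a x +
          sumGE a x (F x * (1 + C1 * x ^ (-ν1))) / Iser a x) atTop (nhds 0) := by
        have := (hl.isBigO.trans_tendsto hx1).add (hg.isBigO.trans_tendsto hx1)
        simpa using this
      have hsmall := ht.eventually (eventually_lt_nhds one_pos)
      have hbig : ∀ᶠ x : ℝ in atTop, (1:ℝ) ≤
          sumLE a x (G x * (1 - C2 * x ^ (-ν2))) / Iser a x +
          sumGE a x (F x * (1 + C1 * x ^ (-ν1))) / Iser a x := by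
        filter_upwards [hsep, eventually_gt_atTop (0:ℝ)] with x hx hx0
        have hIpos := Iser_pos hnn (hsum x hx0) hne hx0
        have hcov := Iser_le_cover hnn hx0.le (hsum x hx0) hx
        rw [← add_div, le_div_iff₀ hIpos, one_mul]
        exact hcov
      obtain ⟨x, h1x, h2x⟩ := (hsmall.and hbig).exists
      linarith
    rcases lt_trichotomy f.natDegree g.natDegree with hd | hd | hd
    · exfalso
      refine core (fun x => f.eval x) (fun x => g.eval x) C ν C' ν' hconc hconc' ?_
      exact sep_lemma g f C' ν' C ν 0 hν' hν hgl
        (poly_div_rpow_zero f (by exact_mod_cast hd)) hgl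
    · rcases lt_trichotomy f.leadingCoeff g.leadingCoeff with hc | hc | hc
      · exfalso
        refine core (fun x => f.eval x) (fun x => g.eval x) C ν C' ν' hconc hconc' ?_
        exact sep_lemma g f C' ν' C ν f.leadingCoeff hν' hν hgl
          (by rw [← hd]; exact poly_div_rpow_lead f hf0) hc
      · exact ⟨hd, hc⟩
      · exfalso
        refine core (fun x => g.eval x) (fun x => f.eval x) C' ν' C ν hconc' hconc ?_
        exact sep_lemma f g C ν C' ν' g.leadingCoeff hν hν' hfl
          (by rw [hd]; exact poly_div_rpow_lead g hg0) hc
    · exfalso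
      refine core (fun x => g.eval x) (fun x => f.eval x) C' ν' C ν hconc' hconc ?_
      exact sep_lemma f g C ν C' ν' 0 hν hν' hfl
        (poly_div_rpow_zero g (by exact_mod_cast hd)) hfl
  · rintro ⟨hdeg, hlead⟩
    have hν'pos : (0:ℝ) < min ν 1 / 2 := by
      have := lt_min hν one_pos
      linarith
    refine ⟨C, hC, min ν 1 / 2, hν'pos, ?_⟩
    set ν' : ℝ := min ν 1 / 2 with hν'def
    have hν'lt : ν' < ν := by
      have h1 := min_le_left ν 1
      rw [hν'def]; linarith
    have hν'lt1 : ν' < 1 := by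
      have h1 := min_le_right ν 1
      rw [hν'def]; linarith
    have hq : Tendsto (fun x : ℝ => (f - g).eval x / x ^ ((g.natDegree : ℝ) - ν'))
        atTop (nhds 0) := by
      by_cases hfg : f = g
      · simp [hfg]
      · apply poly_div_rpow_zero
        have hdd : f.degree = g.degree := by
          rw [Polynomial.degree_eq_natDegree hf0, Polynomial.degree_eq_natDegree hg0,
            hdeg]
        have hdlt : (f - g).natDegree < g.natDegree := by
          refine Polynomial.natDegree_lt_natDegree (sub_ne_zero.2 hfg) ?_
          rw [← hdd]
          exact Polynomial.degree_sub_lt hdd hf0 hlead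
        have hcast : ((f - g).natDegree : ℝ) + 1 ≤ (g.natDegree : ℝ) := by
          exact_mod_cast hdlt
        linarith
    have hq2 : Tendsto (fun x : ℝ => (g - f).eval x / x ^ ((g.natDegree : ℝ) - ν'))
        atTop (nhds 0) := by
      have := hq.neg
      simp only [neg_zero] at this
      refine this.congr fun x => ?_
      simp only [Polynomial.eval_sub]
      ring
    have hflim : Tendsto (fun x : ℝ => f.eval x / x ^ ((g.natDegree : ℝ)))
        atTop (nhds f.leadingCoeff) := by
      rw [← hdeg]; exact poly_div_rpow_lead f hf0
    have hev1 := pos_lemma (f - g) f g C ν ν' f.leadingCoeff hC hν'pos hν'lt hgl hq hflim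
    have hev2 := pos_lemma (g - f) f g C ν ν' f.leadingCoeff hC hν'pos hν'lt hgl hq2 hflim
    intro p hp
    obtain ⟨hLf, hGf⟩ := hconc p hp
    constructor
    · refine IsBigO.trans_isLittleO ?_ hLf
      rw [isBigO_iff]
      refine ⟨1, ?_⟩
      filter_upwards [hev1, eventually_gt_atTop (0:ℝ)] with x hx hx0
      have hIpos := Iser_pos hnn (hsum x hx0) hne hx0
      have hle : g.eval x * (1 - C * x ^ (-ν')) ≤ f.eval x * (1 - C * x ^ (-ν)) := by
        have e : (f - g).eval x + C * g.eval x * x ^ (-ν') - C * f.eval x * x ^ (-ν) =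
            f.eval x * (1 - C * x ^ (-ν)) - g.eval x * (1 - C * x ^ (-ν')) := by
          simp only [Polynomial.eval_sub]; ring
        linarith [e ▸ hx]
      have hmono := sumLE_mono hnn hx0.le (hsum x hx0) hle
      rw [one_mul, Real.norm_eq_abs, Real.norm_eq_abs,
        abs_of_nonneg (div_nonneg (sumLE_nonneg hnn hx0.le) hIpos.le),
        abs_of_nonneg (div_nonneg (sumLE_nonneg hnn hx0.le) hIpos.le)]
      exact (div_le_div_iff_of_pos_right hIpos).2 hmono
    · refine IsBigO.trans_isLittleO ?_ hGf
      rw [isBigO_iff]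
      refine ⟨1, ?_⟩
      filter_upwards [hev2, eventually_gt_atTop (0:ℝ)] with x hx hx0
      have hIpos := Iser_pos hnn (hsum x hx0) hne hx0
      have hle : f.eval x * (1 + C * x ^ (-ν)) ≤ g.eval x * (1 + C * x ^ (-ν')) := by
        have e : (g - f).eval x + C * g.eval x * x ^ (-ν') - C * f.eval x * x ^ (-ν) =
            g.eval x * (1 + C * x ^ (-ν')) - f.eval x * (1 + C * x ^ (-ν)) := by
          simp only [Polynomial.eval_sub]; ring
        linarith [e ▸ hx]
      have hanti := sumGE_anti hnn hx0.le (hsum x hx0) hle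
      rw [one_mul, Real.norm_eq_abs, Real.norm_eq_abs,
        abs_of_nonneg (div_nonneg (sumGE_nonneg hnn hx0.le) hIpos.le),
        abs_of_nonneg (div_nonneg (sumGE_nonneg hnn hx0.le) hIpos.le)]
      exact (div_le_div_iff_of_pos_right hIpos).2 hanti
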